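/- Let a, b, d, f be polynomials over a field with b² = a³ + f·d⁶, and suppose deg f is odd and not divisible by 3, with a, b, d, f nonzero. Then deg(a³) = deg(b²) > deg(f·d⁶); in particular 3·deg a = 2·deg b > deg f + 6·deg d. -/
import Mathlib


open Polynomial

/- If `b² = a³ + f·d⁶` with `deg f` odd and not divisible by `3`, and `a, b, d, f` nonzero, then
`deg (a³) = deg (b²) > deg (f·d⁶)`; in particular `3 deg a = 2 deg b > deg f + 6 deg d`. -/
theorem stmt5 {F : Type*} [Field F] (a b d f : Polynomial F)
    (ha : a ≠ 0) (hb : b ≠ 0) (hd : d ≠ 0) (hf : f ≠ 0)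
    (heq : b ^ 2 = a ^ 3 + f * d ^ 6)
    (hodd : Odd f.natDegree) (h3 : ¬ (3 ∣ f.natDegree)) :
    (a ^ 3).natDegree = (b ^ 2).natDegree ∧
    (f * d ^ 6).natDegree < (b ^ 2).natDegree ∧
    3 * a.natDegree = 2 * b.natDegree ∧
    f.natDegree + 6 * d.natDegree < 2 * b.natDegree := by
  have hd6 : d ^ 6 ≠ 0 := pow_ne_zero _ hd
  have hk : (f * d ^ 6).natDegree = f.natDegree + 6 * d.natDegree := by
    rw [natDegree_mul hf hd6, natDegree_pow]
  have hb2 : (b ^ 2).natDegree = 2 * b.natDegree := natDegree_pow b 2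
  have ha3 : (a ^ 3).natDegree = 3 * a.natDegree := natDegree_pow a 3
  obtain ⟨c, hc⟩ := hodd
  have hne_n : (f * d ^ 6).natDegree ≠ (b ^ 2).natDegree := by
    rw [hk, hb2]; omega
  have hne_m : (f * d ^ 6).natDegree ≠ (a ^ 3).natDegree := by
    rw [hk, ha3]
    intro h
    exact h3 ⟨a.natDegree - 2 * d.natDegree, by omega⟩
  have hsub : f * d ^ 6 = b ^ 2 - a ^ 3 := by rw [heq]; ring
  have hmn : (a ^ 3).natDegree = (b ^ 2).natDegree := by
    by_contra h
    rcases lt_or_gt_of_ne h with hlt | hgt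
    · exact hne_n (by rw [hsub, natDegree_sub_eq_left_of_natDegree_lt hlt])
    · exact hne_m (by rw [hsub, natDegree_sub_eq_right_of_natDegree_lt hgt])
  have hle : (f * d ^ 6).natDegree ≤ (b ^ 2).natDegree := by
    rw [hsub]
    exact le_trans (natDegree_sub_le _ _) (by omega)
  have hlt : (f * d ^ 6).natDegree < (b ^ 2).natDegree := lt_of_le_of_ne hle hne_n
  refine ⟨hmn, hlt, by omega, by omega⟩
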